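/- For the nearest-neighbor up-sampling operator X_up[mx+s, my+t] = X[x,y] (s,t ∈ {0,...,m-1}), each spectral coefficient F(X_up)[u,v] equals Σ_{u',v'} α_up(u,v,u',v')·F(X)[u',v'], where α_up(u,v,u',v') = β_up(u,v) if u'-u is a multiple of 2H and v'-v is a multiple of 2W, and 0 otherwise, with β_up(u,v) = Σ_{s=0}^{m-1} Σ_{t=0}^{m-1} exp(-j2π(us/(2mH)+vt/(2mW))). -/

import Mathlib

open Finset

noncomputable def dft (H W : ℤ) (X : ℤ → ℤ → ℂ) (u v : ℤ) : ℂ :=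
  ∑ x ∈ Finset.Icc (-H) (H - 1), ∑ y ∈ Finset.Icc (-W) (W - 1),
    X x y * Complex.exp (-(2 * (Real.pi : ℂ) * Complex.I) *
      ((u : ℂ) * (x : ℂ) / (2 * (H : ℂ)) + (v : ℂ) * (y : ℂ) / (2 * (W : ℂ))))

noncomputable def idft (H W : ℤ) (F : ℤ → ℤ → ℂ) (x y : ℤ) : ℂ :=
  (1 / (4 * (H : ℂ) * (W : ℂ))) *
    ∑ u ∈ Finset.Icc (-H) (H - 1), ∑ v ∈ Finset.Icc (-W) (W - 1),
      F u v * Complex.exp ((2 * (Real.pi : ℂ) * Complex.I) *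
        ((u : ℂ) * (x : ℂ) / (2 * (H : ℂ)) + (v : ℂ) * (y : ℂ) / (2 * (W : ℂ))))

noncomputable def crop (H W H' W' : ℤ) (F : ℤ → ℤ → ℂ) (u v : ℤ) : ℂ :=
  (((H' * W' : ℤ) : ℂ) / ((H * W : ℤ) : ℂ)) * F u v

noncomputable def upsample (m : ℤ) (X : ℤ → ℤ → ℂ) (x y : ℤ) : ℂ :=
  X (Int.fdiv x m) (Int.fdiv y m)

noncomputable def betaUp (H W m : ℤ) (u v : ℤ) : ℂ :=
  ∑ s ∈ Finset.Icc (0 : ℤ) (m - 1), ∑ t ∈ Finset.Icc (0 : ℤ) (m - 1),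
    Complex.exp (-(2 * (Real.pi : ℂ) * Complex.I) *
      ((u : ℂ) * (s : ℂ) / (2 * (m : ℂ) * (H : ℂ)) + (v : ℂ) * (t : ℂ) / (2 * (m : ℂ) * (W : ℂ))))

noncomputable def alphaUp (H W m : ℤ) (u v u' v' : ℤ) : ℂ :=
  if (2 * H ∣ u' - u) ∧ (2 * W ∣ v' - v) then betaUp H W m u v else 0

/-- Split a sum over `[-mH, mH-1]` into blocks. -/
lemma sum_split (m H : ℤ) (hm : 0 < m) (hH : 0 < H) (f : ℤ → ℂ) :
    ∑ x ∈ Finset.Icc (-(m*H)) (m*H-1), f x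
      = ∑ x' ∈ Finset.Icc (-H) (H-1), ∑ s ∈ Finset.Icc (0:ℤ) (m-1), f (m*x'+s) := by
  rw [← Finset.sum_product']
  refine Finset.sum_nbij' (fun x => (x / m, x % m)) (fun p => m * p.1 + p.2)
    ?_ ?_ ?_ ?_ ?_
  · intro x hx
    simp only [Finset.mem_Icc, Finset.mem_product] at hx ⊢
    have h1 : 0 ≤ x % m := Int.emod_nonneg x hm.ne'
    have h2 : x % m < m := Int.emod_lt_of_pos x hm
    have h3 : m * (x / m) + x % m = x := Int.mul_ediv_add_emod x m
    constructor
    · constructor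
      · nlinarith [hx.1]
      · nlinarith [hx.2]
    · omega
  · intro p hp
    simp only [Finset.mem_Icc, Finset.mem_product] at hp ⊢
    obtain ⟨⟨h1, h2⟩, h3, h4⟩ := hp
    constructor <;> nlinarith
  · intro x hx
    exact Int.mul_ediv_add_emod x m
  · intro p hp
    simp only [Finset.mem_Icc, Finset.mem_product] at hp
    obtain ⟨⟨h1, h2⟩, h3, h4⟩ := hp
    have hq : (m * p.1 + p.2) / m = p.1 := by
      rw [add_comm, Int.add_mul_ediv_left _ _ hm.ne',
        Int.ediv_eq_zero_of_lt h3 (by omega), zero_add]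
    have hr : (m * p.1 + p.2) % m = p.2 := by
      rw [add_comm, mul_comm, Int.add_mul_emod_self_right, Int.emod_eq_of_lt h3 (by omega)]
    exact Prod.ext hq hr
  · intro x hx
    rw [Int.mul_ediv_add_emod x m]

lemma fdiv_block (m a s : ℤ) (hm : 0 < m) (h0 : 0 ≤ s) (h1 : s ≤ m - 1) :
    Int.fdiv (m * a + s) m = a := by
  rw [Int.fdiv_eq_ediv_of_nonneg _ hm.le, add_comm, Int.add_mul_ediv_left _ _ hm.ne',
    Int.ediv_eq_zero_of_lt h0 (by omega), zero_add]

lemma split_frac (a b u x' s : ℂ) (ha : a ≠ 0) (hb : b ≠ 0) :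
    u * (a*x'+s) / (2*(a*b)) = u*x'/(2*b) + u*s/(2*a*b) := by
  field_simp

/-- Unique representative in `[-H, H-1]` mod `2H`. -/
lemma unique_rep (H u : ℤ) (hH : 0 < H) :
    ∃ u₀, u₀ ∈ Finset.Icc (-H) (H-1) ∧ (2*H ∣ u₀ - u) ∧
      ∀ u' ∈ Finset.Icc (-H) (H-1), 2*H ∣ u' - u → u' = u₀ := by
  refine ⟨(u + H) % (2*H) - H, ?_, ?_, ?_⟩
  · have h1 : 0 ≤ (u + H) % (2*H) := Int.emod_nonneg _ (by omega)
    have h2 : (u + H) % (2*H) < 2*H := Int.emod_lt_of_pos _ (by omega)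
    simp only [Finset.mem_Icc]; omega
  · refine ⟨-((u + H) / (2*H)), ?_⟩
    rw [Int.emod_def]; ring
  · intro u' hu' hdvd
    simp only [Finset.mem_Icc] at hu'
    have hd0 : (2*H) ∣ ((u + H) % (2*H) - H) - u := by
      refine ⟨-((u + H) / (2*H)), ?_⟩
      rw [Int.emod_def]; ring
    have hd : (2*H) ∣ u' - ((u + H) % (2*H) - H) := by
      have := dvd_sub hdvd hd0
      simpa using this
    obtain ⟨k, hk⟩ := hd
    have h1 : 0 ≤ (u + H) % (2*H) := Int.emod_nonneg _ (by omega)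
    have h2 : (u + H) % (2*H) < 2*H := Int.emod_lt_of_pos _ (by omega)
    have hlow : -(2*H) < 2*H*k := by omega
    have hhigh : 2*H*k < 2*H := by omega
    have hk0 : k = 0 := by
      rcases lt_trichotomy k 0 with h | h | h
      · exfalso; nlinarith
      · exact h
      · exfalso; nlinarith
    rw [hk0, mul_zero] at hk
    omega

lemma dft_periodic (H W : ℤ) (hH : 0 < H) (hW : 0 < W) (X : ℤ → ℤ → ℂ)
    (u v u' v' : ℤ) (hu : 2*H ∣ u' - u) (hv : 2*W ∣ v' - v) :
    dft H W X u' v' = dft H W X u v := by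
  obtain ⟨k, hk⟩ := hu
  obtain ⟨l, hl⟩ := hv
  have hu' : u' = u + 2*H*k := by omega
  have hv' : v' = v + 2*W*l := by omega
  subst hu' hv'
  unfold dft
  refine Finset.sum_congr rfl fun x _ => Finset.sum_congr rfl fun y _ => ?_
  congr 1
  have hH0 : (H:ℂ) ≠ 0 := Int.cast_ne_zero.mpr hH.ne'
  have hW0 : (W:ℂ) ≠ 0 := Int.cast_ne_zero.mpr hW.ne'
  have harg : -(2 * (Real.pi:ℂ) * Complex.I) *
      (((u + 2*H*k : ℤ):ℂ) * x / (2*H) + ((v + 2*W*l : ℤ):ℂ) * y / (2*W))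
      = -(2 * (Real.pi:ℂ) * Complex.I) * ((u:ℂ) * x / (2*H) + (v:ℂ) * y / (2*W))
        + ((-(k*x + l*y) : ℤ):ℂ) * (2 * (Real.pi:ℂ) * Complex.I) := by
    push_cast
    field_simp
    ring
  rw [harg, Complex.exp_add, Complex.exp_int_mul_two_pi_mul_I, mul_one]

theorem upsample_spectrum (H W m : ℤ) (hm : 0 < m) (hH : 0 < H) (hW : 0 < W)
    (X : ℤ → ℤ → ℂ) (u v : ℤ) :
    dft (m * H) (m * W) (upsample m X) u v
      = ∑ u' ∈ Finset.Icc (-H) (H - 1), ∑ v' ∈ Finset.Icc (-W) (W - 1),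
          alphaUp H W m u v u' v' * dft H W X u' v' := by
  have hm0 : (m:ℂ) ≠ 0 := Int.cast_ne_zero.mpr hm.ne'
  have hH0 : (H:ℂ) ≠ 0 := Int.cast_ne_zero.mpr hH.ne'
  have hW0 : (W:ℂ) ≠ 0 := Int.cast_ne_zero.mpr hW.ne'
  -- LHS = β * dft u v
  have key : dft (m*H) (m*W) (upsample m X) u v = betaUp H W m u v * dft H W X u v := by
    unfold dft upsample
    simp only [sum_split m H hm hH]
    have step : ∀ x' ∈ Finset.Icc (-H) (H-1), ∀ s ∈ Finset.Icc (0:ℤ) (m-1),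
        (∑ y ∈ Finset.Icc (-(m*W)) (m*W - 1),
          X (Int.fdiv (m*x'+s) m) (Int.fdiv y m) *
            Complex.exp (-(2 * (Real.pi:ℂ) * Complex.I) *
              ((u:ℂ) * ((m*x'+s : ℤ):ℂ) / (2 * ((m*H : ℤ):ℂ)) +
               (v:ℂ) * (y:ℂ) / (2 * ((m*W : ℤ):ℂ)))))
        = (∑ y' ∈ Finset.Icc (-W) (W-1),
            (X x' y' * Complex.exp (-(2 * (Real.pi:ℂ) * Complex.I) *
              ((u:ℂ) * (x':ℂ) / (2*(H:ℂ)) + (v:ℂ) * (y':ℂ) / (2*(W:ℂ))))) ) *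
          (∑ t ∈ Finset.Icc (0:ℤ) (m-1),
            Complex.exp (-(2 * (Real.pi:ℂ) * Complex.I) *
              ((u:ℂ) * (s:ℂ) / (2*(m:ℂ)*(H:ℂ)) + (v:ℂ) * (t:ℂ) / (2*(m:ℂ)*(W:ℂ))))) := by
      intro x' hx' s hs
      simp only [Finset.mem_Icc] at hx' hs
      simp only [sum_split m W hm hW]
      rw [Finset.sum_mul_sum]
      refine Finset.sum_congr rfl fun y' hy' => Finset.sum_congr rfl fun t ht => ?_
      simp only [Finset.mem_Icc] at hy' ht
      rw [fdiv_block m x' s hm hs.1 hs.2, fdiv_block m y' t hm ht.1 ht.2]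
      have harg : -(2 * (Real.pi:ℂ) * Complex.I) *
          ((u:ℂ) * ((m*x'+s : ℤ):ℂ) / (2 * ((m*H : ℤ):ℂ)) +
           (v:ℂ) * ((m*y'+t : ℤ):ℂ) / (2 * ((m*W : ℤ):ℂ)))
          = -(2 * (Real.pi:ℂ) * Complex.I) *
              ((u:ℂ) * (x':ℂ) / (2*(H:ℂ)) + (v:ℂ) * (y':ℂ) / (2*(W:ℂ)))
            + -(2 * (Real.pi:ℂ) * Complex.I) *
              ((u:ℂ) * (s:ℂ) / (2*(m:ℂ)*(H:ℂ)) + (v:ℂ) * (t:ℂ) / (2*(m:ℂ)*(W:ℂ))) := by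
        push_cast
        rw [split_frac (m:ℂ) (H:ℂ) _ _ _ hm0 hH0, split_frac (m:ℂ) (W:ℂ) _ _ _ hm0 hW0]
        ring
      rw [harg, Complex.exp_add]
      ring
    calc _ = ∑ x' ∈ Finset.Icc (-H) (H-1), ∑ s ∈ Finset.Icc (0:ℤ) (m-1),
          ((∑ y' ∈ Finset.Icc (-W) (W-1),
            (X x' y' * Complex.exp (-(2 * (Real.pi:ℂ) * Complex.I) *
              ((u:ℂ) * (x':ℂ) / (2*(H:ℂ)) + (v:ℂ) * (y':ℂ) / (2*(W:ℂ))))) ) *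
          (∑ t ∈ Finset.Icc (0:ℤ) (m-1),
            Complex.exp (-(2 * (Real.pi:ℂ) * Complex.I) *
              ((u:ℂ) * (s:ℂ) / (2*(m:ℂ)*(H:ℂ)) + (v:ℂ) * (t:ℂ) / (2*(m:ℂ)*(W:ℂ)))))) :=
        Finset.sum_congr rfl fun x' hx' => Finset.sum_congr rfl fun s hs => step x' hx' s hs
      _ = _ := by rw [← Finset.sum_mul_sum]; rw [betaUp]; ring
  rw [key]
  -- RHS collapses to one term
  obtain ⟨u₀, hu₀mem, hu₀dvd, hu₀uniq⟩ := unique_rep H u hH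
  obtain ⟨v₀, hv₀mem, hv₀dvd, hv₀uniq⟩ := unique_rep W v hW
  rw [Finset.sum_eq_single_of_mem u₀ hu₀mem ?hzero1]
  case hzero1 =>
    intro b hb hne
    refine Finset.sum_eq_zero fun v' hv' => ?_
    rw [alphaUp, if_neg, zero_mul]
    rintro ⟨hPb, _⟩
    exact hne (hu₀uniq b hb hPb)
  rw [Finset.sum_eq_single_of_mem v₀ hv₀mem ?hzero2]
  case hzero2 =>
    intro b hb hne
    rw [alphaUp, if_neg, zero_mul]
    rintro ⟨_, hQb⟩
    exact hne (hv₀uniq b hb hQb)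
  rw [alphaUp, if_pos ⟨hu₀dvd, hv₀dvd⟩,
    dft_periodic H W hH hW X u v u₀ v₀ hu₀dvd hv₀dvd]
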